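/- Fix R ∈ (0, π/2) and φ ∈ (0, π/2), and define γ(t) = ∫_{t-φ}^{t+φ} μ(τ) dτ where μ(τ) = cos R / (cos²τ + cos²R sin²τ), for t ∈ (φ, π - φ). Then γ attains its maximum at t = π/2. -/

import Mathlib

open Real

private lemma cos_sq_key (a b : ℝ) (h : 0 ≤ Real.sin (2*a) * Real.sin (2*b)) :
    Real.cos (a + b) ^ 2 ≤ Real.cos (a - b) ^ 2 := by
  have h1 := Real.cos_sq (a + b)
  have h2 := Real.cos_sq (a - b)
  have h3 : Real.cos (2*(a+b)) = Real.cos (2*a) * Real.cos (2*b)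
      - Real.sin (2*a) * Real.sin (2*b) := by
    rw [show 2*(a+b) = 2*a + 2*b by ring, Real.cos_add]
  have h4 : Real.cos (2*(a-b)) = Real.cos (2*a) * Real.cos (2*b)
      + Real.sin (2*a) * Real.sin (2*b) := by
    rw [show 2*(a-b) = 2*a - 2*b by ring, Real.cos_sub]
  nlinarith

/-- Lemma 3.1 analytically: the sliding integral
`γ(t) = ∫_{t-φ}^{t+φ} cos R/(cos²τ + cos²R sin²τ) dτ` on `(φ, π-φ)`
attains its maximum at `t = π/2`. -/
theorem stmt_13 (R φ : ℝ) (hR : R ∈ Set.Ioo 0 (Real.pi / 2))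
    (hφ : φ ∈ Set.Ioo 0 (Real.pi / 2))
    (γ : ℝ → ℝ)
    (hγ : ∀ t, γ t = ∫ τ in (t - φ)..(t + φ),
        Real.cos R / (Real.cos τ ^ 2 + Real.cos R ^ 2 * Real.sin τ ^ 2)) :
    ∀ t ∈ Set.Ioo φ (Real.pi - φ), γ t ≤ γ (Real.pi / 2) := by
  obtain ⟨hR0, hR2⟩ := hR
  obtain ⟨hφ0, hφ2⟩ := hφ
  have hπ := Real.pi_pos
  set μ : ℝ → ℝ := fun τ => Real.cos R / (Real.cos τ ^ 2 + Real.cos R ^ 2 * Real.sin τ ^ 2)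
    with hμdef
  have hcR : 0 < Real.cos R := Real.cos_pos_of_mem_Ioo ⟨by linarith, hR2⟩
  have hden : ∀ τ : ℝ, 0 < Real.cos τ ^ 2 + Real.cos R ^ 2 * Real.sin τ ^ 2 := by
    intro τ
    nlinarith [Real.sin_sq_add_cos_sq τ, Real.cos_sq_le_one R, mul_pos hcR hcR,
      sq_nonneg (Real.cos τ), sq_nonneg (Real.sin τ)]
  have hcont : Continuous μ := by
    apply continuous_const.div
    · fun_prop
    · exact fun τ => (hden τ).ne'
  -- derivative of γ
  have hG : ∀ x : ℝ, HasDerivAt (fun u => ∫ τ in (0:ℝ)..u, μ τ) (μ x) x :=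
    fun x => (hcont.integral_hasStrictDerivAt 0 x).hasDerivAt
  have hγeq : γ = fun t => (∫ τ in (0:ℝ)..(t+φ), μ τ) - ∫ τ in (0:ℝ)..(t-φ), μ τ := by
    funext t
    rw [hγ t]
    rw [intervalIntegral.integral_interval_sub_left (hcont.intervalIntegrable _ _)
      (hcont.intervalIntegrable _ _)]
  have hderiv : ∀ t : ℝ, HasDerivAt γ (μ (t+φ) - μ (t-φ)) t := by
    intro t
    rw [hγeq]
    have h1 : HasDerivAt (fun t : ℝ => ∫ τ in (0:ℝ)..(t+φ), μ τ) (μ (t+φ)) t := by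
      have := (hG (t+φ)).comp t ((hasDerivAt_id t).add_const φ)
      simpa [Function.comp_def] using this
    have h2 : HasDerivAt (fun t : ℝ => ∫ τ in (0:ℝ)..(t-φ), μ τ) (μ (t-φ)) t := by
      have := (hG (t-φ)).comp t ((hasDerivAt_id t).sub_const φ)
      simpa [Function.comp_def] using this
    exact h1.sub h2
  -- comparison of μ values
  have hμle : ∀ a b : ℝ, 0 ≤ Real.sin (2*a) * Real.sin (2*b) → μ (a - b) ≤ μ (a + b) := by
    intro a b hab
    have hc := cos_sq_key a b hab
    have hDle : Real.cos (a+b) ^ 2 + Real.cos R ^ 2 * Real.sin (a+b) ^ 2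
        ≤ Real.cos (a-b) ^ 2 + Real.cos R ^ 2 * Real.sin (a-b) ^ 2 := by
      nlinarith [Real.sin_sq_add_cos_sq (a+b), Real.sin_sq_add_cos_sq (a-b),
        Real.cos_sq_le_one R, hc]
    exact div_le_div_of_nonneg_left hcR.le (hden _) hDle |>.trans_eq rfl
  -- monotone on [φ, π/2]
  have hmono : MonotoneOn γ (Set.Icc φ (Real.pi/2)) := by
    apply monotoneOn_of_deriv_nonneg (convex_Icc _ _)
      (fun t _ => ((hderiv t).differentiableAt.continuousAt).continuousWithinAt)
      (fun t _ => (hderiv t).differentiableAt.differentiableWithinAt)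
    intro t ht
    rw [interior_Icc] at ht
    rw [(hderiv t).deriv]
    have hs2t : 0 ≤ Real.sin (2*t) := by
      apply Real.sin_nonneg_of_nonneg_of_le_pi <;> [linarith [ht.1]; linarith [ht.2]]
    have hs2φ : 0 ≤ Real.sin (2*φ) := by
      apply Real.sin_nonneg_of_nonneg_of_le_pi <;> linarith
    have := hμle t φ (mul_nonneg hs2t hs2φ)
    linarith
  -- antitone on [π/2, π - φ]
  have hanti : AntitoneOn γ (Set.Icc (Real.pi/2) (Real.pi - φ)) := by
    apply antitoneOn_of_deriv_nonpos (convex_Icc _ _)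
      (fun t _ => ((hderiv t).differentiableAt.continuousAt).continuousWithinAt)
      (fun t _ => (hderiv t).differentiableAt.differentiableWithinAt)
    intro t ht
    rw [interior_Icc] at ht
    rw [(hderiv t).deriv]
    have hs2t : Real.sin (2*t) ≤ 0 := by
      have : Real.sin (2*t) = -Real.sin (2*t - Real.pi) := by
        rw [Real.sin_sub_pi]; ring
      rw [this]
      have : 0 ≤ Real.sin (2*t - Real.pi) := by
        apply Real.sin_nonneg_of_nonneg_of_le_pi <;> [linarith [ht.1]; linarith [ht.2]]
      linarith
    have hs2φ : 0 ≤ Real.sin (2*φ) := by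
      apply Real.sin_nonneg_of_nonneg_of_le_pi <;> linarith
    have hneg : 0 ≤ Real.sin (2*t) * Real.sin (2*(-φ)) := by
      rw [show (2:ℝ)*(-φ) = -(2*φ) by ring, Real.sin_neg]
      nlinarith
    have := hμle t (-φ) hneg
    have e1 : t - -φ = t + φ := by ring
    have e2 : t + -φ = t - φ := by ring
    rw [e1, e2] at this
    linarith
  intro t ht
  obtain ⟨ht1, ht2⟩ := ht
  rcases le_total t (Real.pi/2) with h | h
  · exact hmono ⟨ht1.le, h⟩ ⟨by linarith, le_refl _⟩ h
  · exact hanti ⟨le_refl _, by linarith⟩ ⟨h, ht2.le⟩ h
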